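/- Fix s ∈ ℂ. Let r ∈ ℝ, let φ be holomorphic on ℂ ∖ (−∞, r], and let R = (a, b; c, d) be a 2×2 integer matrix with nonzero determinant such that c > 0 or (c = 0 and a, d > 0), and such that a − c·r > 0. Then the function (φ|_s R)(z) := |det R|^s (cz + d)^{−2s} φ((az + b)/(cz + d)) is well defined and holomorphic on ℂ ∖ (−∞, r'], where r' = max{(dr − b)/(a − cr), −d/c}, with −d/c interpreted as −∞ when c = 0. -/

import Mathlib

/-- The cut `(−∞, r]` on the real axis, as a subset of `ℂ`. -/
def cut (r : ℝ) : Set ℂ := {z | z.re ≤ r ∧ z.im = 0}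

/-- The slash operator
`(φ|ₛ(a,b;c,d))(z) = |ad − bc|^s (cz + d)^{−2s} φ((az + b)/(cz + d))`,
using the principal branches of powers (holomorphic on `ℂ ∖ (−∞, 0]`). -/
noncomputable def slash (s : ℂ) (a b c d : ℤ) (φ : ℂ → ℂ) (z : ℂ) : ℂ :=
  ((|a * d - b * c| : ℤ) : ℂ) ^ s * ((c : ℂ) * z + (d : ℂ)) ^ (-(2 * s)) *
    φ (((a : ℂ) * z + (b : ℂ)) / ((c : ℂ) * z + (d : ℂ)))

/-- The cut is a closed subset of `ℂ`. -/
lemma cut_isClosed (r : ℝ) : IsClosed (cut r) :=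
  (isClosed_le Complex.continuous_re continuous_const).inter
    (isClosed_eq Complex.continuous_im continuous_const)

/-- Proposition 3.2: if `φ` is holomorphic on `ℂ ∖ (−∞, r]`, the matrix
`R = (a, b; c, d)` has nonzero determinant, `c > 0` or (`c = 0` and `a, d > 0`),
and `a − c r > 0`, then `φ|ₛR` is holomorphic on `ℂ ∖ (−∞, r']` with
`r' = max {(dr − b)/(a − cr), −d/c}` (where `−d/c` is interpreted as `−∞`,
i.e. dropped, when `c = 0`). -/
theorem slash_differentiableOn (s : ℂ) (r : ℝ) (φ : ℂ → ℂ) (a b c d : ℤ)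
    (hφ : DifferentiableOn ℂ φ (cut r)ᶜ)
    (hdet : a * d - b * c ≠ 0)
    (hG : 0 < c ∨ (c = 0 ∧ 0 < a ∧ 0 < d))
    (har : (c : ℝ) * r < (a : ℝ)) :
    DifferentiableOn ℂ (slash s a b c d φ)
      (cut (if c = 0 then ((d : ℝ) * r - (b : ℝ)) / (a : ℝ)
        else max (((d : ℝ) * r - (b : ℝ)) / ((a : ℝ) - (c : ℝ) * r))
          (-(d : ℝ) / (c : ℝ))))ᶜ := by
  set r' := (if c = 0 then ((d : ℝ) * r - (b : ℝ)) / (a : ℝ)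
        else max (((d : ℝ) * r - (b : ℝ)) / ((a : ℝ) - (c : ℝ) * r))
          (-(d : ℝ) / (c : ℝ))) with hr'def
  intro z hz
  set x := z.re with hx
  set y := z.im with hy
  have hzre : y = 0 → r' < x := by
    intro h
    by_contra hlt
    exact hz ⟨not_lt.mp hlt, h⟩
  -- in case y = 0, the real denominator is positive
  have hDpos : y = 0 → (0:ℝ) < c * x + d := by
    intro hy0
    have hrx := hzre hy0
    rcases hG with hc | ⟨hc0, ha, hd⟩
    · have hcpos : (0:ℝ) < (c:ℝ) := by exact_mod_cast hc
      have h' : -(d:ℝ) / c < x := lt_of_le_of_lt (by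
        rw [hr'def, if_neg (by exact_mod_cast hc.ne')]
        exact le_max_right _ _) hrx
      have := (div_lt_iff₀ hcpos).mp h'
      nlinarith
    · rw [hc0]; push_cast
      have : (0:ℝ) < d := by exact_mod_cast hd
      linarith
  have hDre : ((c : ℂ) * z + (d : ℂ)).re = c * x + d := by
    simp [Complex.add_re, Complex.mul_re, hx]
  have hDim : ((c : ℂ) * z + (d : ℂ)).im = c * y := by
    simp [Complex.add_im, Complex.mul_im, hy]
  have h1 : ((c : ℂ) * z + (d : ℂ)) ∈ Complex.slitPlane := by
    rw [Complex.mem_slitPlane_iff, hDre, hDim]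
    by_cases hy0 : y = 0
    · exact Or.inl (hDpos hy0)
    · rcases hG with hc | ⟨hc0, ha, hd⟩
      · right
        have hcne : (c:ℝ) ≠ 0 := by exact_mod_cast hc.ne'
        exact mul_ne_zero hcne hy0
      · left
        rw [hc0]; push_cast
        have : (0:ℝ) < d := by exact_mod_cast hd
        linarith
  have hDne : ((c : ℂ) * z + (d : ℂ)) ≠ 0 := Complex.slitPlane_ne_zero h1
  have hnormSq : 0 < Complex.normSq ((c : ℂ) * z + (d : ℂ)) :=
    Complex.normSq_pos.mpr hDne
  set w := ((a : ℂ) * z + (b : ℂ)) / ((c : ℂ) * z + (d : ℂ)) with hw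
  have hwim : w.im = ((a:ℝ) * d - b * c) * y / Complex.normSq ((c : ℂ) * z + (d : ℂ)) := by
    rw [hw, Complex.div_im, hDre, hDim]
    simp only [Complex.add_im, Complex.add_re, Complex.mul_re, Complex.mul_im,
      Complex.intCast_re, Complex.intCast_im]
    ring
  have h2 : w ∉ cut r := by
    intro ⟨hwre, hwim0⟩
    have hy0 : y = 0 := by
      rw [hwim] at hwim0
      have hdet' : ((a:ℝ) * d - b * c) ≠ 0 := by exact_mod_cast hdet
      rcases div_eq_zero_iff.mp hwim0 with h | h
      · rcases mul_eq_zero.mp h with h' | h'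
        · exact absurd h' hdet'
        · exact h'
      · exact absurd h hnormSq.ne'
    have hrx := hzre hy0
    have hDpos' := hDpos hy0
    have hzx : z = (x:ℂ) := Complex.ext (by simp [hx]) (by simp [← hy, hy0])
    have hwreal : w = ((((a:ℝ) * x + b) / ((c:ℝ) * x + d) : ℝ) : ℂ) := by
      rw [hw, hzx]; push_cast; ring
    have hwre' : w.re = ((a:ℝ) * x + b) / ((c:ℝ) * x + d) := by
      rw [hwreal, Complex.ofReal_re]
    have hnum : r * (c * x + d) < (a:ℝ) * x + b := by
      rcases hG with hc | ⟨hc0, ha, hd⟩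
      · have h1' : ((d : ℝ) * r - (b : ℝ)) / ((a : ℝ) - (c : ℝ) * r) < x :=
          lt_of_le_of_lt (by
            rw [hr'def, if_neg (by exact_mod_cast hc.ne')]
            exact le_max_left _ _) hrx
        have harp : (0:ℝ) < (a:ℝ) - c * r := by linarith
        have := (div_lt_iff₀ harp).mp h1'
        nlinarith
      · have hapos : (0:ℝ) < (a:ℝ) := by exact_mod_cast ha
        have h1' : ((d : ℝ) * r - (b : ℝ)) / (a:ℝ) < x := by
          rw [hr'def, if_pos hc0] at hrx; exact hrx
        have := (div_lt_iff₀ hapos).mp h1'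
        rw [hc0]; push_cast
        nlinarith
    have : r < w.re := by
      rw [hwre', lt_div_iff₀ hDpos']
      linarith
    linarith
  have hopen : IsOpen (cut r)ᶜ := (cut_isClosed r).isOpen_compl
  have hφw : DifferentiableAt ℂ φ w := (hφ w h2).differentiableAt (hopen.mem_nhds h2)
  have hmobD : DifferentiableAt ℂ
      (fun z : ℂ => ((a : ℂ) * z + (b : ℂ)) / ((c : ℂ) * z + (d : ℂ))) z :=
    DifferentiableAt.div (by fun_prop) (by fun_prop) hDne
  have hpow : DifferentiableAt ℂ (fun z : ℂ => ((c : ℂ) * z + (d : ℂ)) ^ (-(2 * s))) z :=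
    DifferentiableAt.cpow (by fun_prop) (differentiableAt_const _) h1
  have : DifferentiableAt ℂ (slash s a b c d φ) z := by
    unfold slash
    exact ((differentiableAt_const _).mul hpow).mul (hφw.comp z hmobD)
  exact this.differentiableWithinAt
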